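/- arXiv:1308.6111 — 3 statements merged into one kernel-verified Lean document; each statement's English description precedes it below -/
import Mathlib

section
/- Let T be a measure-preserving transformation of a probability space (X, ℱ, μ) and let 𝔸 : ℕ × X → ℝ^{d×d} be a measurable linear cocycle over T such that x ↦ log⁺‖𝔸(1,x)‖ is μ-integrable. Then for μ-a.e. x ∈ X the following holds: if there exists a vector v ∈ ℝ^d such that ‖𝔸(n,x)v‖ does not converge to 0 as n → ∞ (i.e., the stable space V^s(x) = {v : ‖𝔸(n,x)v‖ → 0} is a proper subspace of ℝ^d), then limsup_{n→∞} ‖𝔸(n,x)‖ ≥ 1, where ‖𝔸(n,x)‖ is the operator norm. -/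
open MeasureTheory Filter Topology

noncomputable section

instance matMeasurableSpace {d : ℕ} : MeasurableSpace (Matrix (Fin d) (Fin d) ℝ) :=
  inferInstanceAs (MeasurableSpace (Fin d → Fin d → ℝ))

/-- The action of a `d × d` real matrix on `ℝ^d` with the Euclidean norm. -/
def matApp {d : ℕ} (B : Matrix (Fin d) (Fin d) ℝ) (v : EuclideanSpace ℝ (Fin d)) :
    EuclideanSpace ℝ (Fin d) :=
  Matrix.toEuclideanLin B v

/-- The operator norm of a `d × d` real matrix induced by the Euclidean norm on `ℝ^d`. -/
def matOpNorm {d : ℕ} (B : Matrix (Fin d) (Fin d) ℝ) : ℝ :=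
  ‖LinearMap.toContinuousLinearMap (Matrix.toEuclideanLin B)‖

/-- The natural logarithm with values in `EReal`, with the convention `log 0 = -∞`. -/
def elog (t : ℝ) : EReal := if t = 0 then ⊥ else ((Real.log t : ℝ) : EReal)

/-- The operator norm of the restriction of (the linear map induced by) `B` to a set `S`:
`sup {‖Bv‖ : v ∈ S, ‖v‖ = 1}`. -/
def restNorm {d : ℕ} (B : Matrix (Fin d) (Fin d) ℝ) (S : Set (EuclideanSpace ℝ (Fin d))) : ℝ :=
  sSup {r | ∃ v ∈ S, ‖v‖ = 1 ∧ r = ‖matApp B v‖}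

/-- The stable space of the cocycle `𝔸` over the point `x`. -/
def stableSet {X : Type*} {d : ℕ} (𝔸 : ℕ → X → Matrix (Fin d) (Fin d) ℝ) (x : X) :
    Set (EuclideanSpace ℝ (Fin d)) :=
  {v | Tendsto (fun n => ‖matApp (𝔸 n x) v‖) atTop (𝓝 0)}

lemma matOpNorm_nonneg {d : ℕ} (B : Matrix (Fin d) (Fin d) ℝ) : 0 ≤ matOpNorm B :=
  norm_nonneg _

lemma matApp_le {d : ℕ} (B : Matrix (Fin d) (Fin d) ℝ) (v : EuclideanSpace ℝ (Fin d)) :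
    ‖matApp B v‖ ≤ matOpNorm B * ‖v‖ := by
  have h := (LinearMap.toContinuousLinearMap (Matrix.toEuclideanLin B)).le_opNorm v
  have h2 : (LinearMap.toContinuousLinearMap (Matrix.toEuclideanLin B)) v = matApp B v := rfl
  rw [h2] at h
  exact h

lemma matApp_mul {d : ℕ} (B C : Matrix (Fin d) (Fin d) ℝ) (v : EuclideanSpace ℝ (Fin d)) :
    matApp (B * C) v = matApp B (matApp C v) := by
  simp [matApp, Matrix.toEuclideanLin_apply, Matrix.mulVec_mulVec]

lemma matOpNorm_mul {d : ℕ} (B C : Matrix (Fin d) (Fin d) ℝ) :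
    matOpNorm (B * C) ≤ matOpNorm B * matOpNorm C := by
  apply ContinuousLinearMap.opNorm_le_bound _
    (mul_nonneg (matOpNorm_nonneg B) (matOpNorm_nonneg C))
  intro v
  have h2 : (LinearMap.toContinuousLinearMap (Matrix.toEuclideanLin (B * C))) v
      = matApp (B * C) v := rfl
  rw [h2, matApp_mul]
  calc ‖matApp B (matApp C v)‖ ≤ matOpNorm B * ‖matApp C v‖ := matApp_le _ _
    _ ≤ matOpNorm B * (matOpNorm C * ‖v‖) :=
        mul_le_mul_of_nonneg_left (matApp_le _ _) (matOpNorm_nonneg _)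
    _ = matOpNorm B * matOpNorm C * ‖v‖ := by ring

lemma matOpNorm_continuous {d : ℕ} :
    Continuous fun B : Matrix (Fin d) (Fin d) ℝ => matOpNorm B := by
  have h : Continuous fun B : Matrix (Fin d) (Fin d) ℝ =>
      LinearMap.toContinuousLinearMap (Matrix.toEuclideanLin B) :=
    LinearMap.continuous_of_finiteDimensional
      ((LinearMap.toContinuousLinearMap : _ ≃ₗ[ℝ] _).toLinearMap.comp
        (Matrix.toEuclideanLin : Matrix (Fin d) (Fin d) ℝ ≃ₗ[ℝ] _).toLinearMap)
  exact continuous_norm.comp h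

instance matBorel {d : ℕ} : BorelSpace (Matrix (Fin d) (Fin d) ℝ) :=
  inferInstanceAs (BorelSpace (Fin d → Fin d → ℝ))

/-- Key deterministic lemma: if the cocycle norms over `x` are eventually at most `q < 1`
and `x` returns infinitely often to the set where this holds, then the norms tend to `0`. -/
lemma key_decay {X : Type*} {d : ℕ} (T : X → X) (𝔸 : ℕ → X → Matrix (Fin d) (Fin d) ℝ)
    (hcoc : ∀ x m n, 𝔸 (m + n) x = 𝔸 n (T^[m] x) * 𝔸 m x)
    (x : X) (q : ℝ) (hq0 : 0 < q) (hq1 : q < 1) (N : ℕ)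
    (hxS : ∀ n, N ≤ n → matOpNorm (𝔸 n x) ≤ q)
    (hrec : ∃ᶠ m in atTop, ∀ n, N ≤ n → matOpNorm (𝔸 n (T^[m] x)) ≤ q) :
    Tendsto (fun n => matOpNorm (𝔸 n x)) atTop (𝓝 0) := by
  have hfr : ∀ a : ℕ, ∃ b, a ≤ b ∧ ∀ n, N ≤ n → matOpNorm (𝔸 n (T^[b] x)) ≤ q := by
    intro a
    obtain ⟨b, hb, hpb⟩ := frequently_atTop.mp hrec a
    exact ⟨b, hb, hpb⟩
  let m : ℕ → ℕ := fun k => Nat.rec 0 (fun _ mk => (hfr (mk + N)).choose) k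
  have hm0 : m 0 = 0 := rfl
  have hgap : ∀ k, m k + N ≤ m (k + 1) := fun k => (hfr (m k + N)).choose_spec.1
  have hPall : ∀ k, ∀ n, N ≤ n → matOpNorm (𝔸 n (T^[m k] x)) ≤ q := by
    intro k
    cases k with
    | zero => simpa [hm0] using hxS
    | succ k => exact (hfr (m k + N)).choose_spec.2
  have claimA : ∀ k, ∀ n, N ≤ n → matOpNorm (𝔸 (m k + n) x) ≤ q ^ (k + 1) := by
    intro k
    induction k with
    | zero =>
      intro n hn
      simpa [hm0] using hxS n hn
    | succ k ih =>
      intro n hn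
      have hg := hgap k
      have h1 : matOpNorm (𝔸 (m (k + 1)) x) ≤ q ^ (k + 1) := by
        have hsplit : m (k + 1) = m k + (m (k + 1) - m k) := by omega
        rw [hsplit]
        exact ih _ (by omega)
      have h2 : matOpNorm (𝔸 n (T^[m (k + 1)] x)) ≤ q := hPall (k + 1) n hn
      calc matOpNorm (𝔸 (m (k + 1) + n) x)
          = matOpNorm (𝔸 n (T^[m (k + 1)] x) * 𝔸 (m (k + 1)) x) := by rw [hcoc]
        _ ≤ matOpNorm (𝔸 n (T^[m (k + 1)] x)) * matOpNorm (𝔸 (m (k + 1)) x) :=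
            matOpNorm_mul _ _
        _ ≤ q * q ^ (k + 1) :=
            mul_le_mul h2 h1 (matOpNorm_nonneg _)
              (le_of_lt hq0)
        _ = q ^ (k + 2) := by ring
  rw [Metric.tendsto_atTop]
  intro ε hε
  obtain ⟨k, hk⟩ : ∃ k, q ^ (k + 1) < ε := by
    have h := tendsto_pow_atTop_nhds_zero_of_lt_one (le_of_lt hq0) hq1
    obtain ⟨k, hk⟩ := (h.eventually (gt_mem_nhds hε)).exists
    exact ⟨k, lt_of_le_of_lt (pow_le_pow_of_le_one (le_of_lt hq0) (le_of_lt hq1)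
      (Nat.le_succ k)) hk⟩
  refine ⟨m k + N, fun n hn => ?_⟩
  have hbound : matOpNorm (𝔸 n x) ≤ q ^ (k + 1) := by
    have hrep : n = m k + (n - m k) := by omega
    calc matOpNorm (𝔸 n x) = matOpNorm (𝔸 (m k + (n - m k)) x) := by rw [← hrep]
      _ ≤ q ^ (k + 1) := claimA k _ (by omega)
  have : dist (matOpNorm (𝔸 n x)) 0 = matOpNorm (𝔸 n x) := by
    rw [Real.dist_eq, sub_zero, abs_of_nonneg (matOpNorm_nonneg _)]
  rw [this]
  exact lt_of_le_of_lt hbound hk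

theorem stmt5 {X : Type*} [MeasurableSpace X] {d : ℕ}
    (μ : Measure X) [IsProbabilityMeasure μ] (T : X → X)
    (hT : MeasurePreserving T μ μ)
    (𝔸 : ℕ → X → Matrix (Fin d) (Fin d) ℝ)
    (hmeas : Measurable fun p : ℕ × X => 𝔸 p.1 p.2)
    (hcoc0 : ∀ x, 𝔸 0 x = 1)
    (hcoc : ∀ x m n, 𝔸 (m + n) x = 𝔸 n (T^[m] x) * 𝔸 m x)
    (hint : Integrable (fun x => max 0 (Real.log (matOpNorm (𝔸 1 x)))) μ) :
    ∀ᵐ x ∂μ,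
      (∃ v : EuclideanSpace ℝ (Fin d),
        ¬ Tendsto (fun n => ‖matApp (𝔸 n x) v‖) atTop (𝓝 0)) →
      (1 : EReal) ≤ limsup (fun n : ℕ => ((matOpNorm (𝔸 n x) : ℝ) : EReal)) atTop := by
  classical
  set S : ℚ → ℕ → Set X := fun q N => {x | ∀ n, N ≤ n → matOpNorm (𝔸 n x) ≤ (q : ℝ)}
    with hS
  have hAnmeas : ∀ n : ℕ, Measurable fun x => matOpNorm (𝔸 n x) := by
    intro n
    exact matOpNorm_continuous.measurable.comp (hmeas.comp measurable_prodMk_left)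
  have hSmeas : ∀ q N, MeasurableSet (S q N) := by
    intro q N
    have : S q N = ⋂ n, ⋂ _ : N ≤ n, {x | matOpNorm (𝔸 n x) ≤ (q : ℝ)} := by
      ext x; simp [hS]
    rw [this]
    exact MeasurableSet.iInter fun n => MeasurableSet.iInter fun _ =>
      measurableSet_le (hAnmeas n) measurable_const
  have hcons : Conservative T μ := hT.conservative
  have hae : ∀ᵐ x ∂μ, ∀ q : ℚ, ∀ N : ℕ, x ∈ S q N → ∃ᶠ n in atTop, T^[n] x ∈ S q N := by
    rw [ae_all_iff]
    intro q
    rw [ae_all_iff]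
    intro N
    exact hcons.ae_mem_imp_frequently_image_mem (hSmeas q N).nullMeasurableSet
  filter_upwards [hae] with x hx hv
  obtain ⟨v, hv⟩ := hv
  by_contra hlim
  rw [not_le] at hlim
  obtain ⟨r, hrA, hr2⟩ := EReal.exists_between_coe_real hlim
  have hr1 : r < 1 := by exact_mod_cast hr2
  obtain ⟨q, hq1, hq2⟩ := exists_rat_btwn hr1
  have hlimq : limsup (fun n : ℕ => ((matOpNorm (𝔸 n x) : ℝ) : EReal)) atTop
      < ((q : ℝ) : EReal) := lt_trans hrA (by exact_mod_cast hq1)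
  have hev : ∀ᶠ n in atTop, ((matOpNorm (𝔸 n x) : ℝ) : EReal) < ((q : ℝ) : EReal) :=
    eventually_lt_of_limsup_lt hlimq
  obtain ⟨N, hN⟩ := eventually_atTop.mp hev
  have hxS : ∀ n, N ≤ n → matOpNorm (𝔸 n x) ≤ (q : ℝ) := fun n hn =>
    le_of_lt (EReal.coe_lt_coe_iff.mp (hN n hn))
  have hq0 : (0 : ℝ) < (q : ℝ) :=
    lt_of_le_of_lt (matOpNorm_nonneg (𝔸 N x)) (EReal.coe_lt_coe_iff.mp (hN N le_rfl))
  have hrec : ∃ᶠ n in atTop, ∀ k, N ≤ k → matOpNorm (𝔸 k (T^[n] x)) ≤ (q : ℝ) :=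
    hx q N hxS
  have htend := key_decay T 𝔸 hcoc x (q : ℝ) hq0 hq2 N hxS hrec
  apply hv
  apply squeeze_zero (fun n => norm_nonneg _) (fun n => matApp_le _ _)
  simpa using htend.mul_const ‖v‖

end
end

section
/- Let T be a measurable transformation of a measurable space (X, ℱ), let 𝔸 : ℕ × X → ℝ^{d×d} be a measurable linear cocycle over T, and let μ be a probability measure on (X, ℱ) preserved by T. For x ∈ X let V^s(x) = {v ∈ ℝ^d : ‖𝔸(n,x)v‖ → 0 as n → ∞}, a linear subspace of ℝ^d. Then for μ-a.e. x ∈ X and every n ≥ 1, dim V^s(x) = dim V^s(T^n x). -/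
open MeasureTheory Filter Topology

noncomputable section

/-- The stable set as a submodule. -/
def stableSubmodule {X : Type*} {d : ℕ} (𝔸 : ℕ → X → Matrix (Fin d) (Fin d) ℝ) (x : X) :
    Submodule ℝ (EuclideanSpace ℝ (Fin d)) where
  carrier := stableSet 𝔸 x
  zero_mem' := by
    simp only [stableSet, matApp, Set.mem_setOf_eq, map_zero, norm_zero]
    exact tendsto_const_nhds
  add_mem' := by
    intro a b ha hb
    have h := ha.add hb
    rw [add_zero] at h
    refine squeeze_zero (fun n => norm_nonneg _) (fun n => ?_) h
    simp only [matApp, map_add]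
    exact norm_add_le _ _
  smul_mem' := by
    intro c a ha
    have h := ha.const_mul ‖c‖
    rw [mul_zero] at h
    refine squeeze_zero (fun n => norm_nonneg _) (fun n => ?_) h
    simp only [matApp, _root_.map_smul, norm_smul, Real.norm_eq_abs]
    exact le_refl _

lemma span_stableSet {X : Type*} {d : ℕ} (𝔸 : ℕ → X → Matrix (Fin d) (Fin d) ℝ) (x : X) :
    Submodule.span ℝ (stableSet 𝔸 x) = stableSubmodule 𝔸 x :=
  Submodule.span_eq (stableSubmodule 𝔸 x)

lemma mem_stableSubmodule {X : Type*} {d : ℕ} (𝔸 : ℕ → X → Matrix (Fin d) (Fin d) ℝ) (x : X)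
    (v : EuclideanSpace ℝ (Fin d)) :
    v ∈ stableSubmodule 𝔸 x ↔ Tendsto (fun n => ‖matApp (𝔸 n x) v‖) atTop (𝓝 0) := Iff.rfl

/-- Rank–nullity style inequality: pulling back a subspace cannot decrease dimension. -/
lemma finrank_le_finrank_comap {d : ℕ}
    (g : EuclideanSpace ℝ (Fin d) →ₗ[ℝ] EuclideanSpace ℝ (Fin d))
    (W : Submodule ℝ (EuclideanSpace ℝ (Fin d))) :
    Module.finrank ℝ W ≤ Module.finrank ℝ (W.comap g) := by
  classical
  set U := W.comap g
  have hker : LinearMap.ker g ≤ U := by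
    intro v hv
    simp only [U, Submodule.mem_comap, LinearMap.mem_ker.mp hv]
    exact W.zero_mem
  have h1 : Module.finrank ℝ (Submodule.map g U) + Module.finrank ℝ (LinearMap.ker g)
      = Module.finrank ℝ U := by
    have hrn := LinearMap.finrank_range_add_finrank_ker (g.domRestrict U)
    rw [LinearMap.range_domRestrict] at hrn
    have hkeq : LinearMap.ker (g.domRestrict U) = Submodule.comap U.subtype (LinearMap.ker g) := by
      ext v; simp [LinearMap.mem_ker]
    rw [hkeq] at hrn
    rw [← hrn]
    congr 1
    exact (Submodule.comapSubtypeEquivOfLe hker).finrank_eq.symm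
  have h2 : Submodule.map g U = LinearMap.range g ⊓ W := Submodule.map_comap_eq g W
  have h3 : Module.finrank ℝ (LinearMap.range g ⊔ W : Submodule ℝ _)
      + Module.finrank ℝ (LinearMap.range g ⊓ W : Submodule ℝ _)
      = Module.finrank ℝ (LinearMap.range g) + Module.finrank ℝ W :=
    Submodule.finrank_sup_add_finrank_inf_eq _ _
  have h4 : Module.finrank ℝ (LinearMap.range g ⊔ W : Submodule ℝ _)
      ≤ Module.finrank ℝ (EuclideanSpace ℝ (Fin d)) := Submodule.finrank_le _
  have h5 : Module.finrank ℝ (LinearMap.range g) + Module.finrank ℝ (LinearMap.ker g)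
      = Module.finrank ℝ (EuclideanSpace ℝ (Fin d)) := LinearMap.finrank_range_add_finrank_ker g
  rw [h2] at h1
  omega

lemma stableSubmodule_comap {X : Type*} {d : ℕ} (𝔸 : ℕ → X → Matrix (Fin d) (Fin d) ℝ)
    (T : X → X) (hcoc : ∀ x m n, 𝔸 (m + n) x = 𝔸 n (T^[m] x) * 𝔸 m x) (x : X) :
    stableSubmodule 𝔸 x
      = (stableSubmodule 𝔸 (T x)).comap (Matrix.toEuclideanLin (𝔸 1 x)) := by
  ext v
  rw [Submodule.mem_comap, mem_stableSubmodule, mem_stableSubmodule]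
  have key : ∀ n : ℕ, matApp (𝔸 n (T x)) (Matrix.toEuclideanLin (𝔸 1 x) v)
      = matApp (𝔸 (1 + n) x) v := by
    intro n
    rw [hcoc x 1 n, matApp_mul]
    simp [Function.iterate_one, matApp]
  have hrw : (fun n => ‖matApp (𝔸 n (T x)) (Matrix.toEuclideanLin (𝔸 1 x) v)‖)
      = fun n => ‖matApp (𝔸 (n + 1) x) v‖ := by
    funext n; rw [key n, Nat.add_comm]
  rw [hrw]
  exact (tendsto_add_atTop_iff_nat 1).symm

lemma fdim_step {X : Type*} {d : ℕ} (𝔸 : ℕ → X → Matrix (Fin d) (Fin d) ℝ) (T : X → X)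
    (hcoc : ∀ x m n, 𝔸 (m + n) x = 𝔸 n (T^[m] x) * 𝔸 m x) (x : X) :
    Module.finrank ℝ (stableSubmodule 𝔸 (T x)) ≤ Module.finrank ℝ (stableSubmodule 𝔸 x) := by
  rw [stableSubmodule_comap 𝔸 T hcoc x]
  exact finrank_le_finrank_comap _ _

/-- The compact set of orthonormal `k`-frames. -/
lemma isCompact_orthonormal {d : ℕ} (k : ℕ) :
    IsCompact {v : Fin k → EuclideanSpace ℝ (Fin d) | Orthonormal ℝ v} := by
  have hOclosed : IsClosed {w : Fin k → EuclideanSpace ℝ (Fin d) | Orthonormal ℝ w} := by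
    have heq : {w : Fin k → EuclideanSpace ℝ (Fin d) | Orthonormal ℝ w} =
        ⋂ i, ⋂ i', {w | (inner ℝ (w i) (w i') : ℝ) = if i = i' then (1:ℝ) else 0} := by
      ext w; simp [orthonormal_iff_ite, Set.mem_iInter]
    rw [heq]
    exact isClosed_iInter fun i => isClosed_iInter fun i' =>
      isClosed_eq (Continuous.inner (continuous_apply i) (continuous_apply i')) continuous_const
  refine (isCompact_closedBall (0 : Fin k → EuclideanSpace ℝ (Fin d)) 1).of_isClosed_subset
    hOclosed ?_
  intro w hw
  rw [Metric.mem_closedBall, dist_zero_right]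
  exact (pi_norm_le_iff_of_nonneg zero_le_one).mpr fun i => le_of_eq (hw.1 i)

/-- The key rigidity lemma: if for every `ε > 0` there is an orthonormal `k`-frame which is
eventually `ε`-contracted by the sequence `A`, then there is an orthonormal `k`-frame which is
asymptotically contracted. -/
lemma rigidity {d k : ℕ}
    (A : ℕ → (EuclideanSpace ℝ (Fin d) →ₗ[ℝ] EuclideanSpace ℝ (Fin d)))
    (h : ∀ j : ℕ, ∃ v : Fin k → EuclideanSpace ℝ (Fin d), Orthonormal ℝ v ∧
      ∃ N : ℕ, ∀ n, N ≤ n → ∀ i, ‖A n (v i)‖ ≤ 1 / ((j : ℝ) + 1)) :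
    ∃ v : Fin k → EuclideanSpace ℝ (Fin d), Orthonormal ℝ v ∧
      ∀ i, Tendsto (fun n => ‖A n (v i)‖) atTop (𝓝 0) := by
  classical
  choose vj hon Nj hNj using h
  set S : Set (EuclideanSpace ℝ (Fin d)) := ⋃ j, Set.range (vj j) with hS
  set L : Submodule ℝ (EuclideanSpace ℝ (Fin d)) := Submodule.span ℝ S with hL
  -- every element of L has uniformly bounded orbit
  have hBdd : ∀ u ∈ L, ∃ c : ℝ, ∀ n, ‖A n u‖ ≤ c := by
    intro u hu
    induction hu using Submodule.span_induction with
    | mem x hx =>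
      obtain ⟨j, i, rfl⟩ : ∃ j i, vj j i = x := by
        simpa [hS, Set.mem_iUnion, Set.mem_range] using hx
      refine ⟨1 / ((j : ℝ) + 1) + ∑ m ∈ Finset.range (Nj j), ‖A m (vj j i)‖, fun n => ?_⟩
      by_cases hn : Nj j ≤ n
      · have hbd := hNj j n hn i
        have hs : (0:ℝ) ≤ ∑ m ∈ Finset.range (Nj j), ‖A m (vj j i)‖ :=
          Finset.sum_nonneg fun m _ => norm_nonneg ((A m) (vj j i))
        linarith
      · refine le_add_of_nonneg_of_le (by positivity) ?_
        exact Finset.single_le_sum (f := fun m => ‖A m (vj j i)‖)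
          (fun m _ => norm_nonneg ((A m) (vj j i)))
          (Finset.mem_range.mpr (Nat.lt_of_not_le hn))
    | zero => exact ⟨0, fun n => by simp⟩
    | add x y hx hy ihx ihy =>
      obtain ⟨c1, hc1⟩ := ihx; obtain ⟨c2, hc2⟩ := ihy
      exact ⟨c1 + c2, fun n => by
        rw [map_add]; exact (norm_add_le _ _).trans (add_le_add (hc1 n) (hc2 n))⟩
    | smul a x hx ihx =>
      obtain ⟨c, hc⟩ := ihx
      refine ⟨|a| * c, fun n => ?_⟩
      rw [_root_.map_smul, norm_smul, Real.norm_eq_abs]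
      exact mul_le_mul_of_nonneg_left (hc n) (abs_nonneg a)
  -- the bounded-orbit linear map into ℓ∞
  let Φfun : L → (BoundedContinuousFunction ℕ (EuclideanSpace ℝ (Fin d))) := fun u =>
    BoundedContinuousFunction.ofNormedAddCommGroup (fun n => A n u)
      continuous_of_discreteTopology (hBdd u u.2).choose (hBdd u u.2).choose_spec
  have Φfun_apply : ∀ (u : L) (n : ℕ), Φfun u n = A n u := fun u n => rfl
  let Φ : L →ₗ[ℝ] (BoundedContinuousFunction ℕ (EuclideanSpace ℝ (Fin d))) :=
    { toFun := Φfun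
      map_add' := by
        intro u v; ext n
        simp [Φfun_apply, Submodule.coe_add, map_add]
      map_smul' := by
        intro a u; ext n
        simp [Φfun_apply, Submodule.coe_smul, _root_.map_smul] }
  set C := ‖LinearMap.toContinuousLinearMap Φ‖ with hCdef
  have hC0 : 0 ≤ C := hCdef ▸ (LinearMap.toContinuousLinearMap Φ).opNorm_nonneg
  have hCn : ∀ (u : L) (n : ℕ), ‖A n (u : EuclideanSpace ℝ (Fin d))‖ ≤ C * ‖u‖ := by
    intro u n
    calc ‖A n (u : EuclideanSpace ℝ (Fin d))‖ = ‖Φfun u n‖ := by rw [Φfun_apply]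
      _ ≤ ‖Φfun u‖ := BoundedContinuousFunction.norm_coe_le_norm _ n
      _ = ‖LinearMap.toContinuousLinearMap Φ u‖ := by
            congr 1
      _ ≤ C * ‖u‖ := (LinearMap.toContinuousLinearMap Φ).le_opNorm u
  -- the compact set of orthonormal frames inside L
  set K : Set (Fin k → EuclideanSpace ℝ (Fin d)) :=
    {w | Orthonormal ℝ w ∧ ∀ i, w i ∈ L} with hK
  have hKclosed : IsClosed K := by
    have h1 : IsClosed {w : Fin k → EuclideanSpace ℝ (Fin d) | Orthonormal ℝ w} := by
      have heq : {w : Fin k → EuclideanSpace ℝ (Fin d) | Orthonormal ℝ w} =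
          ⋂ i, ⋂ i', {w | (inner ℝ (w i) (w i') : ℝ) = if i = i' then (1:ℝ) else 0} := by
        ext w; simp [orthonormal_iff_ite, Set.mem_iInter]
      rw [heq]
      exact isClosed_iInter fun i => isClosed_iInter fun i' =>
        isClosed_eq (Continuous.inner (continuous_apply i) (continuous_apply i'))
          continuous_const
    have h2 : IsClosed {w : Fin k → EuclideanSpace ℝ (Fin d) | ∀ i, w i ∈ L} := by
      have heq : {w : Fin k → EuclideanSpace ℝ (Fin d) | ∀ i, w i ∈ L} =
          ⋂ i, (fun w : Fin k → EuclideanSpace ℝ (Fin d) => w i) ⁻¹' (L : Set _) := by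
        ext w; simp [Set.mem_iInter]
      rw [heq]
      exact isClosed_iInter fun i =>
        (Submodule.closed_of_finiteDimensional L).preimage (continuous_apply i)
    exact h1.inter h2
  have hKsub : K ⊆ Metric.closedBall 0 1 := by
    intro w hw
    rw [Metric.mem_closedBall, dist_zero_right]
    exact (pi_norm_le_iff_of_nonneg zero_le_one).mpr fun i => le_of_eq (hw.1.1 i)
  have hKcpt : IsCompact K :=
    (isCompact_closedBall (0 : Fin k → EuclideanSpace ℝ (Fin d)) 1).of_isClosed_subset
      hKclosed hKsub
  have vjK : ∀ j, vj j ∈ K := fun j =>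
    ⟨hon j, fun i => Submodule.subset_span (Set.mem_iUnion.mpr ⟨j, Set.mem_range_self i⟩)⟩
  obtain ⟨w, hwK, φ, hφ, hconv⟩ := hKcpt.tendsto_subseq vjK
  refine ⟨w, hwK.1, fun i => ?_⟩
  rw [Metric.tendsto_atTop]
  intro ε hε
  obtain ⟨j₀, hj₀⟩ := exists_nat_one_div_lt (half_pos hε)
  have hδ : 0 < ε / (2 * (C + 1)) := by positivity
  obtain ⟨j₁, hj₁⟩ := (Metric.tendsto_atTop.mp hconv) (ε / (2 * (C + 1))) hδ
  set j := max j₀ j₁ with hj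
  refine ⟨Nj (φ j), fun n hn => ?_⟩
  have hmem : w i - vj (φ j) i ∈ L := Submodule.sub_mem L (hwK.2 i) ((vjK (φ j)).2 i)
  have hsplit : ‖A n (w i)‖ ≤ ‖A n (vj (φ j) i)‖ + ‖A n (w i - vj (φ j) i)‖ := by
    have hdec : A n (w i) = A n (vj (φ j) i) + A n (w i - vj (φ j) i) := by
      rw [← map_add]; congr 1; abel
    rw [hdec]; exact norm_add_le _ _
  have h1 : ‖A n (vj (φ j) i)‖ ≤ 1 / ((φ j : ℝ) + 1) := hNj (φ j) n hn i
  have h1' : 1 / ((φ j : ℝ) + 1) ≤ 1 / ((j₀ : ℝ) + 1) := by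
    apply one_div_le_one_div_of_le (by positivity)
    have : (j₀ : ℝ) ≤ (φ j : ℝ) := by
      exact_mod_cast le_trans (le_max_left j₀ j₁) (le_trans (le_refl j) hφ.le_apply)
    linarith
  have h2 : ‖A n (w i - vj (φ j) i)‖ ≤ C * ‖w i - vj (φ j) i‖ := hCn ⟨_, hmem⟩ n
  have h3 : ‖w i - vj (φ j) i‖ ≤ ε / (2 * (C + 1)) := by
    have hd1 : dist (vj (φ j) i) (w i) ≤ dist ((vj ∘ φ) j) w := dist_le_pi_dist _ _ i
    have hd2 : dist ((vj ∘ φ) j) w < ε / (2 * (C + 1)) := hj₁ j (le_max_right _ _)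
    rw [← dist_eq_norm, dist_comm]
    exact le_trans hd1 hd2.le
  have h4 : C * ‖w i - vj (φ j) i‖ ≤ ε / 2 := by
    calc C * ‖w i - vj (φ j) i‖ ≤ C * (ε / (2 * (C + 1))) :=
          mul_le_mul_of_nonneg_left h3 hC0
      _ = (ε / 2) * (C / (C + 1)) := by
            have hC1 : C + 1 ≠ 0 := by linarith
            field_simp
      _ ≤ (ε / 2) * 1 := mul_le_mul_of_nonneg_left
            (by rw [div_le_one (by linarith)]; linarith) (by linarith)
      _ = ε / 2 := mul_one _
  rw [Real.dist_eq, sub_zero, abs_of_nonneg (norm_nonneg _)]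
  have := hsplit.trans (add_le_add (h1.trans h1') (h2.trans h4))
  linarith [hj₀]

/-- Compactness over finite horizons: frames good on all finite windows yield a frame good on
the whole tail. -/
lemma frame_compactness {d k : ℕ}
    (A : ℕ → (EuclideanSpace ℝ (Fin d) →ₗ[ℝ] EuclideanSpace ℝ (Fin d))) (ε : ℝ) (N : ℕ)
    (h : ∀ M : ℕ, ∃ v : Fin k → EuclideanSpace ℝ (Fin d), Orthonormal ℝ v ∧
      ∀ n, N ≤ n → n ≤ M → ∀ i, ‖A n (v i)‖ ≤ ε) :
    ∃ v : Fin k → EuclideanSpace ℝ (Fin d), Orthonormal ℝ v ∧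
      ∀ n, N ≤ n → ∀ i, ‖A n (v i)‖ ≤ ε := by
  classical
  set K : ℕ → Set (Fin k → EuclideanSpace ℝ (Fin d)) := fun M =>
    {v | Orthonormal ℝ v ∧ ∀ n, N ≤ n → n ≤ M → ∀ i, ‖A n (v i)‖ ≤ ε} with hKdef
  have hOclosed : IsClosed {w : Fin k → EuclideanSpace ℝ (Fin d) | Orthonormal ℝ w} := by
    have heq : {w : Fin k → EuclideanSpace ℝ (Fin d) | Orthonormal ℝ w} =
        ⋂ i, ⋂ i', {w | (inner ℝ (w i) (w i') : ℝ) = if i = i' then (1:ℝ) else 0} := by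
      ext w; simp [orthonormal_iff_ite, Set.mem_iInter]
    rw [heq]
    exact isClosed_iInter fun i => isClosed_iInter fun i' =>
      isClosed_eq (Continuous.inner (continuous_apply i) (continuous_apply i')) continuous_const
  have hKclosed : ∀ M, IsClosed (K M) := by
    intro M
    have heq : K M = {w : Fin k → EuclideanSpace ℝ (Fin d) | Orthonormal ℝ w} ∩
        ⋂ (n : ℕ), ⋂ (_ : N ≤ n) , ⋂ (_ : n ≤ M), ⋂ (i : Fin k),
          {v : Fin k → EuclideanSpace ℝ (Fin d) | ‖A n (v i)‖ ≤ ε} := by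
      ext v
      simp only [hKdef, Set.mem_setOf_eq, Set.mem_inter_iff, Set.mem_iInter]
    rw [heq]
    refine hOclosed.inter ?_
    refine isClosed_iInter fun n => isClosed_iInter fun _ => isClosed_iInter fun _ =>
      isClosed_iInter fun i => ?_
    have hc : Continuous fun v : Fin k → EuclideanSpace ℝ (Fin d) => ‖A n (v i)‖ :=
      ((A n).continuous_of_finiteDimensional.comp (continuous_apply i)).norm
    exact isClosed_le hc continuous_const
  have hKsub : ∀ M, K M ⊆ Metric.closedBall 0 1 := by
    intro M w hw
    rw [Metric.mem_closedBall, dist_zero_right]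
    exact (pi_norm_le_iff_of_nonneg zero_le_one).mpr fun i => le_of_eq (hw.1.1 i)
  have hKcpt : IsCompact (K 0) :=
    (isCompact_closedBall (0 : Fin k → EuclideanSpace ℝ (Fin d)) 1).of_isClosed_subset
      (hKclosed 0) (hKsub 0)
  have hdec : ∀ M, K (M + 1) ⊆ K M := by
    intro M v hv
    exact ⟨hv.1, fun n h1 h2 i => hv.2 n h1 (h2.trans (Nat.le_succ M)) i⟩
  have hne : ∀ M, (K M).Nonempty := by
    intro M
    obtain ⟨v, h1, h2⟩ := h M
    exact ⟨v, h1, h2⟩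
  obtain ⟨v, hv⟩ := IsCompact.nonempty_iInter_of_sequence_nonempty_isCompact_isClosed
    K hdec hne hKcpt hKclosed
  rw [Set.mem_iInter] at hv
  refine ⟨v, (hv 0).1, fun n hn i => ?_⟩
  exact (hv n).2 n hn (le_refl n) i

/-- The measurable description of `{x | k ≤ dim Vˢ(x)}`. -/
def Sset {X : Type*} {d : ℕ} (𝔸 : ℕ → X → Matrix (Fin d) (Fin d) ℝ) (k : ℕ) : Set X :=
  ⋂ (j : ℕ), ⋃ (N : ℕ), ⋂ (M : ℕ),
    {x | ∃ v : Fin k → EuclideanSpace ℝ (Fin d), Orthonormal ℝ v ∧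
      ∀ n, N ≤ n → n ≤ M → ∀ i, ‖matApp (𝔸 n x) (v i)‖ ≤ 1 / ((j : ℝ) + 1)}

lemma mem_Sset_iff {X : Type*} {d : ℕ} (𝔸 : ℕ → X → Matrix (Fin d) (Fin d) ℝ) (k : ℕ) (x : X) :
    x ∈ Sset 𝔸 k ↔ k ≤ Module.finrank ℝ (stableSubmodule 𝔸 x) := by
  classical
  constructor
  · intro hx
    have h : ∀ j : ℕ, ∃ v : Fin k → EuclideanSpace ℝ (Fin d), Orthonormal ℝ v ∧
        ∃ N : ℕ, ∀ n, N ≤ n → ∀ i,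
          ‖Matrix.toEuclideanLin (𝔸 n x) (v i)‖ ≤ 1 / ((j : ℝ) + 1) := by
      intro j
      rw [Sset, Set.mem_iInter] at hx
      obtain ⟨N, hN⟩ := Set.mem_iUnion.mp (hx j)
      rw [Set.mem_iInter] at hN
      obtain ⟨v, hv1, hv2⟩ := frame_compactness (fun n => Matrix.toEuclideanLin (𝔸 n x))
        (1 / ((j : ℝ) + 1)) N (fun M => hN M)
      exact ⟨v, hv1, N, hv2⟩
    obtain ⟨v, hon, htend⟩ := rigidity (fun n => Matrix.toEuclideanLin (𝔸 n x)) h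
    have hle : Submodule.span ℝ (Set.range v) ≤ stableSubmodule 𝔸 x := by
      rw [Submodule.span_le]
      rintro _ ⟨i, rfl⟩
      exact (mem_stableSubmodule 𝔸 x (v i)).mpr (htend i)
    have hcard : Module.finrank ℝ (Submodule.span ℝ (Set.range v)) = k := by
      rw [finrank_span_eq_card hon.linearIndependent, Fintype.card_fin]
    rw [← hcard]
    exact Submodule.finrank_mono hle
  · intro hk
    rw [Sset, Set.mem_iInter]
    intro j
    set V := stableSubmodule 𝔸 x with hV
    let b := stdOrthonormalBasis ℝ V
    let u : Fin k → EuclideanSpace ℝ (Fin d) := fun i => (b (Fin.castLE hk i) : V)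
    have honu : Orthonormal ℝ u := by
      have h1 : Orthonormal ℝ fun i : Fin k => b (Fin.castLE hk i) :=
        b.orthonormal.comp _ (Fin.castLE_injective hk)
      rw [orthonormal_iff_ite] at h1 ⊢
      intro i i'
      rw [← h1 i i']
      exact Submodule.coe_inner V _ _
    have htend : ∀ i, Tendsto (fun n => ‖matApp (𝔸 n x) (u i)‖) atTop (𝓝 0) := fun i =>
      (mem_stableSubmodule 𝔸 x (u i)).mp (SetLike.coe_mem _)
    have hev : ∀ᶠ n in atTop, ∀ i, ‖matApp (𝔸 n x) (u i)‖ ≤ 1 / ((j : ℝ) + 1) := by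
      rw [eventually_all]
      intro i
      have hpos : (0 : ℝ) < 1 / ((j : ℝ) + 1) := by positivity
      exact ((htend i).eventually_lt_const hpos).mono fun n h => h.le
    obtain ⟨N, hN⟩ := eventually_atTop.mp hev
    refine Set.mem_iUnion.mpr ⟨N, Set.mem_iInter.mpr fun M => ?_⟩
    exact ⟨u, honu, fun n h1 _ i => hN n h1 i⟩

lemma measurable_matApp_norm {X : Type*} [MeasurableSpace X] {d : ℕ}
    (𝔸 : ℕ → X → Matrix (Fin d) (Fin d) ℝ)
    (hmeas : Measurable fun p : ℕ × X => 𝔸 p.1 p.2) (n : ℕ) (u : EuclideanSpace ℝ (Fin d)) :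
    Measurable fun x => ‖matApp (𝔸 n x) u‖ := by
  have hA : Measurable fun x => 𝔸 n x := hmeas.comp measurable_prodMk_left
  have hentry : ∀ i j : Fin d, Measurable fun x => 𝔸 n x i j := fun i j =>
    (measurable_pi_apply j).comp ((measurable_pi_apply i).comp hA)
  have hcomp : ∀ i : Fin d, Measurable fun x => matApp (𝔸 n x) u i := by
    intro i
    have : (fun x => matApp (𝔸 n x) u i) = fun x => ∑ j, 𝔸 n x i j * u j := rfl
    rw [this]
    exact Finset.measurable_sum _ fun j _ => (hentry i j).mul_const (u j)
  have : (fun x => ‖matApp (𝔸 n x) u‖)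
      = fun x => Real.sqrt (∑ i, ‖matApp (𝔸 n x) u i‖ ^ 2) := by
    funext x; rw [EuclideanSpace.norm_eq]
  rw [this]
  refine Real.continuous_sqrt.measurable.comp ?_
  refine Finset.measurable_sum _ fun i _ => ?_
  have : (fun x => ‖matApp (𝔸 n x) u i‖ ^ 2) = fun x => |matApp (𝔸 n x) u i| ^ 2 := by
    funext x; rw [Real.norm_eq_abs]
  rw [this]
  exact ((hcomp i).abs).pow_const 2

lemma measurable_frame_set {X : Type*} [MeasurableSpace X] {d : ℕ}
    (𝔸 : ℕ → X → Matrix (Fin d) (Fin d) ℝ)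
    (hmeas : Measurable fun p : ℕ × X => 𝔸 p.1 p.2) (k N M : ℕ) (ε : ℝ) :
    MeasurableSet {x : X | ∃ v : Fin k → EuclideanSpace ℝ (Fin d), Orthonormal ℝ v ∧
      ∀ n, N ≤ n → n ≤ M → ∀ i, ‖matApp (𝔸 n x) (v i)‖ ≤ ε} := by
  classical
  set 𝒦 : Set (Fin k → EuclideanSpace ℝ (Fin d)) := {v | Orthonormal ℝ v} with h𝒦
  obtain ⟨D, hDc, hDd⟩ := TopologicalSpace.exists_countable_dense ↥𝒦
  have hcore : ∀ (v : Fin k → EuclideanSpace ℝ (Fin d)) (c : ℝ),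
      MeasurableSet {x : X | ∀ n, N ≤ n → n ≤ M → ∀ i, ‖matApp (𝔸 n x) (v i)‖ ≤ c} := by
    intro v c
    have heq : {x : X | ∀ n, N ≤ n → n ≤ M → ∀ i, ‖matApp (𝔸 n x) (v i)‖ ≤ c}
        = ⋂ (n : ℕ), ⋂ (_ : N ≤ n), ⋂ (_ : n ≤ M), ⋂ (i : Fin k),
          {x : X | ‖matApp (𝔸 n x) (v i)‖ ≤ c} := by
      ext x; simp only [Set.mem_setOf_eq, Set.mem_iInter]
    rw [heq]
    refine MeasurableSet.iInter fun n => MeasurableSet.iInter fun _ =>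
      MeasurableSet.iInter fun _ => MeasurableSet.iInter fun i => ?_
    exact measurableSet_le (measurable_matApp_norm 𝔸 hmeas n (v i)) measurable_const
  have hmain : {x : X | ∃ v : Fin k → EuclideanSpace ℝ (Fin d), Orthonormal ℝ v ∧
        ∀ n, N ≤ n → n ≤ M → ∀ i, ‖matApp (𝔸 n x) (v i)‖ ≤ ε}
      = ⋂ (m : ℕ), ⋃ (v : ↥𝒦) (_ : v ∈ D),
        {x : X | ∀ n, N ≤ n → n ≤ M → ∀ i,
          ‖matApp (𝔸 n x) ((v : Fin k → EuclideanSpace ℝ (Fin d)) i)‖ ≤ ε + 1 / ((m : ℝ) + 1)} := by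
    ext x
    simp only [Set.mem_setOf_eq, Set.mem_iInter, Set.mem_iUnion]
    constructor
    · rintro ⟨v, hon, hv⟩ m
      set U : Set (Fin k → EuclideanSpace ℝ (Fin d)) :=
        {w | ∀ n, N ≤ n → n ≤ M → ∀ i, ‖matApp (𝔸 n x) (w i)‖ < ε + 1 / ((m : ℝ) + 1)} with hU
      have hUopen : IsOpen U := by
        have heq : U = ⋂ n ∈ Finset.Icc N M, ⋂ i : Fin k,
            {w : Fin k → EuclideanSpace ℝ (Fin d) |
              ‖matApp (𝔸 n x) (w i)‖ < ε + 1 / ((m : ℝ) + 1)} := by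
          ext w
          simp only [hU, Set.mem_setOf_eq, Set.mem_iInter, Finset.mem_Icc]
          constructor
          · intro h n hn i; exact h n hn.1 hn.2 i
          · intro h n h1 h2 i; exact h n ⟨h1, h2⟩ i
        rw [heq]
        refine isOpen_biInter_finset fun n _ => isOpen_iInter_of_finite fun i => ?_
        have hc : Continuous fun w : Fin k → EuclideanSpace ℝ (Fin d) =>
            ‖matApp (𝔸 n x) (w i)‖ :=
          ((Matrix.toEuclideanLin (𝔸 n x)).continuous_of_finiteDimensional.comp
            (continuous_apply i)).norm
        exact isOpen_lt hc continuous_const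
      have hvU : v ∈ U := by
        intro n h1 h2 i
        have := hv n h1 h2 i
        have hpos : (0:ℝ) < 1 / ((m : ℝ) + 1) := by positivity
        linarith
      have hvK : v ∈ 𝒦 := hon
      obtain ⟨vd, hvdD, hvdU⟩ := hDd.exists_mem_open (hUopen.preimage continuous_subtype_val)
        ⟨⟨v, hvK⟩, hvU⟩
      exact ⟨vd, hvdD, fun n h1 h2 i => (hvdU n h1 h2 i).le⟩
    · intro hx
      choose vm hmD hmcond using hx
      obtain ⟨w, hwK, φ, hφ, hconv⟩ := (isCompact_orthonormal k).tendsto_subseq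
        (x := fun m => (vm m).1) (fun m => (vm m).2)
      refine ⟨w, hwK, fun n h1 h2 i => ?_⟩
      have hc : Continuous fun w : Fin k → EuclideanSpace ℝ (Fin d) =>
          ‖matApp (𝔸 n x) (w i)‖ :=
        ((Matrix.toEuclideanLin (𝔸 n x)).continuous_of_finiteDimensional.comp
          (continuous_apply i)).norm
      have htendA : Tendsto (fun m => ‖matApp (𝔸 n x) ((vm (φ m)).1 i)‖) atTop
          (𝓝 (‖matApp (𝔸 n x) (w i)‖)) := (hc.tendsto w).comp hconv
      have htendB : Tendsto (fun m : ℕ => ε + 1 / ((m : ℝ) + 1)) atTop (𝓝 ε) := by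
        have : Tendsto (fun n : ℕ => 1 / ((n : ℝ) + 1)) atTop (𝓝 0) :=
          tendsto_one_div_add_atTop_nhds_zero_nat
        simpa using tendsto_const_nhds.add this
      refine le_of_tendsto_of_tendsto' htendA htendB fun m => ?_
      have hb := hmcond (φ m) n h1 h2 i
      have hmono : 1 / ((φ m : ℝ) + 1) ≤ 1 / ((m : ℝ) + 1) := by
        apply one_div_le_one_div_of_le (by positivity)
        have : (m : ℝ) ≤ (φ m : ℝ) := by exact_mod_cast hφ.le_apply
        linarith
      linarith
  rw [hmain]
  refine MeasurableSet.iInter fun m => ?_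
  exact MeasurableSet.biUnion hDc fun v _ => hcore _ _

theorem stmt9 {X : Type*} [MeasurableSpace X] {d : ℕ}
    (T : X → X) (hTmeas : Measurable T)
    (𝔸 : ℕ → X → Matrix (Fin d) (Fin d) ℝ)
    (hmeas : Measurable fun p : ℕ × X => 𝔸 p.1 p.2)
    (hcoc0 : ∀ x, 𝔸 0 x = 1)
    (hcoc : ∀ x m n, 𝔸 (m + n) x = 𝔸 n (T^[m] x) * 𝔸 m x)
    (μ : Measure X) [IsProbabilityMeasure μ] (hT : MeasurePreserving T μ μ) :
    ∀ᵐ x ∂μ, ∀ n : ℕ, 1 ≤ n →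
      Module.finrank ℝ (Submodule.span ℝ (stableSet 𝔸 x)) =
        Module.finrank ℝ (Submodule.span ℝ (stableSet 𝔸 (T^[n] x))) := by
  classical
  have hSmeas : ∀ k : ℕ, MeasurableSet (Sset 𝔸 k) := by
    intro k
    refine MeasurableSet.iInter fun j => ?_
    refine MeasurableSet.iUnion fun N => ?_
    refine MeasurableSet.iInter fun M => ?_
    exact measurable_frame_set 𝔸 hmeas k N M _
  have hsub : ∀ k : ℕ, T ⁻¹' (Sset 𝔸 k) ⊆ Sset 𝔸 k := by
    intro k x hx
    rw [Set.mem_preimage, mem_Sset_iff] at hx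
    rw [mem_Sset_iff]
    exact hx.trans (fdim_step 𝔸 T hcoc x)
  have hnull : ∀ k : ℕ, μ (Sset 𝔸 k \ T ⁻¹' (Sset 𝔸 k)) = 0 := by
    intro k
    have hpre : μ (T ⁻¹' (Sset 𝔸 k)) = μ (Sset 𝔸 k) :=
      hT.measure_preimage (hSmeas k).nullMeasurableSet
    rw [measure_diff (hsub k) ((hSmeas k).preimage hTmeas).nullMeasurableSet
      (measure_ne_top μ _), hpre, tsub_self]
  set B : Set X := ⋃ k : ℕ, (Sset 𝔸 k \ T ⁻¹' (Sset 𝔸 k)) with hB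
  have hBnull : μ B = 0 := measure_iUnion_null fun k => hnull k
  have hBmeas : MeasurableSet B :=
    MeasurableSet.iUnion fun k => (hSmeas k).diff ((hSmeas k).preimage hTmeas)
  set Nset : Set X := ⋃ i : ℕ, T^[i] ⁻¹' B with hNset
  have hNnull : μ Nset = 0 := measure_iUnion_null fun i => by
    rw [(hT.iterate i).measure_preimage hBmeas.nullMeasurableSet]; exact hBnull
  have hae : ∀ᵐ x ∂μ, x ∉ Nset := measure_eq_zero_iff_ae_notMem.mp hNnull
  filter_upwards [hae] with x hx
  intro n _
  have hstep : ∀ i : ℕ, Module.finrank ℝ (stableSubmodule 𝔸 (T^[i] x))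
      = Module.finrank ℝ (stableSubmodule 𝔸 (T^[i + 1] x)) := by
    intro i
    have hyB : T^[i] x ∉ B := fun hc => hx (Set.mem_iUnion.mpr ⟨i, hc⟩)
    set y := T^[i] x with hy
    set k := Module.finrank ℝ (stableSubmodule 𝔸 y) with hk
    have hyS : y ∈ Sset 𝔸 k := (mem_Sset_iff 𝔸 k y).mpr le_rfl
    have hyT : y ∈ T ⁻¹' (Sset 𝔸 k) := by
      by_contra hcon
      exact hyB (Set.mem_iUnion.mpr ⟨k, hyS, hcon⟩)
    have h1 : k ≤ Module.finrank ℝ (stableSubmodule 𝔸 (T y)) :=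
      (mem_Sset_iff 𝔸 k (T y)).mp hyT
    have h2 : Module.finrank ℝ (stableSubmodule 𝔸 (T y)) ≤ k := fdim_step 𝔸 T hcoc y
    have hiter : T^[i + 1] x = T y := by rw [hy, Function.iterate_succ_apply']
    rw [hiter]
    exact le_antisymm h1 h2
  have hall : ∀ i : ℕ, Module.finrank ℝ (stableSubmodule 𝔸 (T^[i] x))
      = Module.finrank ℝ (stableSubmodule 𝔸 x) := by
    intro i
    induction i with
    | zero => rfl
    | succ i ih => rw [← hstep i]; exact ih
  rw [span_stableSet, span_stableSet]
  exact (hall n).symm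

end
end

section
/- Let T be a measure-preserving transformation of a probability space (X, ℱ, μ) and let 𝔸 : ℕ × X → ℝ^{d×d} be a measurable linear cocycle over T such that x ↦ log⁺‖𝔸(1,x)‖ is μ-integrable. For x ∈ X and λ ∈ ℝ let V_λ(x) = {v ∈ ℝ^d : limsup_{n→∞} (1/n) log‖𝔸(n,x)v‖ ≤ λ} (a linear subspace of ℝ^d, with the convention log 0 = −∞). Then for μ-a.e. x ∈ X and every λ ∈ ℝ, dim V_λ(T x) = dim V_λ(x). -/
open MeasureTheory Filter Topology

noncomputable section

namespace S16
variable {d : ℕ}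

def good (M : ℕ → Matrix (Fin d) (Fin d) ℝ) (lam : ℝ) (v : EuclideanSpace ℝ (Fin d)) : Prop :=
  ∀ c : ℝ, lam < c → ∀ᶠ n : ℕ in atTop, ‖matApp (M n) v‖ ≤ Real.exp (n * c)

lemma good_mono {M : ℕ → Matrix (Fin d) (Fin d) ℝ} {lam lam' : ℝ} (h : lam ≤ lam')
    {v : EuclideanSpace ℝ (Fin d)} (hv : good M lam v) : good M lam' v :=
  fun c hc => hv c (lt_of_le_of_lt h hc)

lemma elog_inv_mul_le_iff {n : ℕ} (hn : 1 ≤ n) {t c : ℝ} (ht : 0 ≤ t) :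
    (((n : ℝ)⁻¹ : ℝ) : EReal) * elog t ≤ (c : EReal) ↔ t ≤ Real.exp (n * c) := by
  rcases eq_or_lt_of_le ht with h0 | h0
  · subst h0
    have hpos : (0 : EReal) < (((n : ℝ)⁻¹ : ℝ) : EReal) := by
      exact_mod_cast (by positivity : (0:ℝ) < (n:ℝ)⁻¹)
    rw [show elog 0 = ⊥ by simp [elog], EReal.mul_bot_of_pos hpos]
    constructor
    · intro _; exact (Real.exp_pos _).le
    · intro _; exact bot_le
  · rw [elog, if_neg (ne_of_gt h0)]
    rw [← EReal.coe_mul, EReal.coe_le_coe_iff]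
    rw [inv_mul_le_iff₀ (by positivity : (0:ℝ) < (n:ℝ))]
    exact (Real.log_le_iff_le_exp h0)

lemma good_iff_limsup {M : ℕ → Matrix (Fin d) (Fin d) ℝ} {lam : ℝ}
    {v : EuclideanSpace ℝ (Fin d)} :
    limsup (fun n : ℕ => (((n : ℝ)⁻¹ : ℝ) : EReal) * elog ‖matApp (M n) v‖) atTop
      ≤ (lam : EReal) ↔ good M lam v := by
  constructor
  · intro h c hc
    have h2 : limsup (fun n : ℕ => (((n : ℝ)⁻¹ : ℝ) : EReal) * elog ‖matApp (M n) v‖) atTop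
        < (c : EReal) := lt_of_le_of_lt h (by exact_mod_cast hc)
    have h3 := Filter.eventually_lt_of_limsup_lt h2
    filter_upwards [h3, Filter.eventually_ge_atTop 1] with n hn hn1
    exact (elog_inv_mul_le_iff hn1 (norm_nonneg _)).1 hn.le
  · intro h
    by_contra hcon
    rw [not_le] at hcon
    obtain ⟨c, hc1, hc2⟩ := EReal.exists_between_coe_real hcon
    have hc1' : lam < c := by exact_mod_cast hc1
    have : limsup (fun n : ℕ => (((n : ℝ)⁻¹ : ℝ) : EReal) * elog ‖matApp (M n) v‖) atTop
        ≤ (c : EReal) := by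
      apply Filter.limsup_le_of_le (h := ?_)
      filter_upwards [h c hc1', Filter.eventually_ge_atTop 1] with n hn hn1
      exact (elog_inv_mul_le_iff hn1 (norm_nonneg _)).2 hn
    exact absurd hc2 (not_lt_of_ge this)

lemma matApp_add (B : Matrix (Fin d) (Fin d) ℝ) (v w : EuclideanSpace ℝ (Fin d)) :
    matApp B (v + w) = matApp B v + matApp B w := map_add _ _ _

lemma matApp_smul (B : Matrix (Fin d) (Fin d) ℝ) (a : ℝ) (v : EuclideanSpace ℝ (Fin d)) :
    matApp B (a • v) = a • matApp B v := map_smul _ _ _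

def goodSub (M : ℕ → Matrix (Fin d) (Fin d) ℝ) (lam : ℝ) :
    Submodule ℝ (EuclideanSpace ℝ (Fin d)) where
  carrier := {v | good M lam v}
  zero_mem' := by
    intro c _
    filter_upwards with n
    rw [show matApp (M n) 0 = 0 from map_zero _]
    simpa using (Real.exp_pos _).le
  add_mem' := by
    intro u v hu hv c hc
    set c' := (lam + c) / 2
    have h1 : lam < c' := by simp only [c']; linarith
    have h2 : c' < c := by simp only [c']; linarith
    have h3 : ∀ᶠ n : ℕ in atTop, 2 * Real.exp (n * c') ≤ Real.exp (n * c) := by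
      obtain ⟨N, hN⟩ := exists_nat_ge (Real.log 2 / (c - c'))
      filter_upwards [Filter.eventually_ge_atTop N] with n hn
      have hn' : Real.log 2 / (c - c') ≤ (n : ℝ) := le_trans hN (by exact_mod_cast hn)
      have h4 : Real.log 2 ≤ (n : ℝ) * (c - c') := by
        rw [div_le_iff₀ (by linarith : (0:ℝ) < c - c')] at hn'
        linarith
      calc 2 * Real.exp (n * c') = Real.exp (Real.log 2 + n * c') := by
            rw [Real.exp_add, Real.exp_log (by norm_num)]
        _ ≤ Real.exp (n * c) := by
            apply Real.exp_le_exp.2; nlinarith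
    filter_upwards [hu c' h1, hv c' h1, h3] with n h5 h6 h7
    calc ‖matApp (M n) (u + v)‖ ≤ ‖matApp (M n) u‖ + ‖matApp (M n) v‖ := by
          rw [matApp_add]; exact norm_add_le _ _
      _ ≤ 2 * Real.exp (n * c') := by linarith
      _ ≤ Real.exp (n * c) := h7
  smul_mem' := by
    intro a v hv c hc
    set c' := (lam + c) / 2
    have h1 : lam < c' := by simp only [c']; linarith
    have h2 : c' < c := by simp only [c']; linarith
    have h3 : ∀ᶠ n : ℕ in atTop, |a| * Real.exp (n * c') ≤ Real.exp (n * c) := by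
      rcases le_or_gt |a| 0 with ha | ha
      · filter_upwards with n
        have := (Real.exp_pos ((n : ℝ) * c)).le
        nlinarith [Real.exp_pos ((n:ℝ) * c')]
      · obtain ⟨N, hN⟩ := exists_nat_ge (Real.log |a| / (c - c'))
        filter_upwards [Filter.eventually_ge_atTop N] with n hn
        have hn' : Real.log |a| / (c - c') ≤ (n : ℝ) := le_trans hN (by exact_mod_cast hn)
        have h4 : Real.log |a| ≤ (n : ℝ) * (c - c') := by
          rw [div_le_iff₀ (by linarith : (0:ℝ) < c - c')] at hn'
          linarith
        calc |a| * Real.exp (n * c') = Real.exp (Real.log |a| + n * c') := by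
              rw [Real.exp_add, Real.exp_log ha]
          _ ≤ Real.exp (n * c) := by apply Real.exp_le_exp.2; nlinarith
    filter_upwards [hv c' h1, h3] with n h5 h6
    calc ‖matApp (M n) (a • v)‖ = |a| * ‖matApp (M n) v‖ := by
          rw [matApp_smul, norm_smul, Real.norm_eq_abs]
      _ ≤ |a| * Real.exp (n * c') := by
          exact mul_le_mul_of_nonneg_left h5 (abs_nonneg a)
      _ ≤ Real.exp (n * c) := h6

lemma mem_goodSub {M : ℕ → Matrix (Fin d) (Fin d) ℝ} {lam : ℝ} {v : EuclideanSpace ℝ (Fin d)} :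
    v ∈ goodSub M lam ↔ good M lam v := Iff.rfl

lemma goodSub_mono (M : ℕ → Matrix (Fin d) (Fin d) ℝ) {lam lam' : ℝ} (h : lam ≤ lam') :
    goodSub M lam ≤ goodSub M lam' := fun _ hv => good_mono h hv

lemma stab (M : ℕ → Matrix (Fin d) (Fin d) ℝ) (lam : ℝ) :
    ∃ c : ℚ, lam < (c : ℝ) ∧ ∀ c' : ℚ, lam < (c' : ℝ) → (c' : ℝ) ≤ (c : ℝ) →
      goodSub M lam = goodSub M (c' : ℝ) := by
  set A : Set ℕ := {n | ∃ c : ℚ, lam < (c : ℝ) ∧ Module.finrank ℝ (goodSub M (c : ℝ)) = n}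
  have hA : A.Nonempty := by
    obtain ⟨c, hc⟩ := exists_rat_gt lam
    exact ⟨_, c, hc, rfl⟩
  obtain ⟨c₁, hc₁, hmin⟩ : ∃ c₁ : ℚ, lam < (c₁ : ℝ) ∧
      Module.finrank ℝ (goodSub M (c₁ : ℝ)) = sInf A := by
    obtain ⟨c₁, h1, h2⟩ := Nat.sInf_mem hA
    exact ⟨c₁, h1, h2⟩
  -- S_{c'} = S_{c₁} for all rational c' in (lam, c₁]:
  have key : ∀ c' : ℚ, lam < (c' : ℝ) → (c' : ℝ) ≤ (c₁ : ℝ) →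
      goodSub M (c' : ℝ) = goodSub M (c₁ : ℝ) := by
    intro c' h1 h2
    have hle : goodSub M (c' : ℝ) ≤ goodSub M (c₁ : ℝ) := goodSub_mono M h2
    have hrank : Module.finrank ℝ (goodSub M (c₁ : ℝ)) ≤
        Module.finrank ℝ (goodSub M (c' : ℝ)) := by
      rw [hmin]
      exact Nat.sInf_le ⟨c', h1, rfl⟩
    exact Submodule.eq_of_le_of_finrank_le hle hrank
  -- S_lam = S_{c₁}:
  have hsub : goodSub M lam = goodSub M (c₁ : ℝ) := by
    apply le_antisymm (goodSub_mono M hc₁.le)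
    intro v hv c hc
    obtain ⟨c₂, h1, h2⟩ := exists_rat_btwn (lt_min hc hc₁)
    have h3 : lam < (c₂ : ℝ) := h1
    have h4 : (c₂ : ℝ) ≤ (c₁ : ℝ) := (lt_of_lt_of_le h2 (min_le_right _ _)).le
    have h5 : v ∈ goodSub M (c₂ : ℝ) := by rw [key c₂ h3 h4]; exact hv
    exact h5 c (lt_of_lt_of_le h2 (min_le_left _ _) : (c₂ : ℝ) < c)
  exact ⟨c₁, hc₁, fun c' h1 h2 => by rw [hsub, key c' h1 h2]⟩

lemma matApp_mul (B C : Matrix (Fin d) (Fin d) ℝ) (v : EuclideanSpace ℝ (Fin d)) :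
    matApp (B * C) v = matApp B (matApp C v) := by
  simp [matApp, Matrix.toEuclideanLin_apply, Matrix.mulVec_mulVec]

lemma finrank_le_comap (f : EuclideanSpace ℝ (Fin d) →ₗ[ℝ] EuclideanSpace ℝ (Fin d))
    (W : Submodule ℝ (EuclideanSpace ℝ (Fin d))) :
    Module.finrank ℝ W ≤ Module.finrank ℝ (W.comap f) := by
  have hW : W.comap f = (Submodule.map (LinearMap.adjoint f) Wᗮ)ᗮ := by
    ext v
    simp only [Submodule.mem_comap, Submodule.mem_orthogonal]
    constructor
    · intro hv u hu
      obtain ⟨w, hw, rfl⟩ := Submodule.mem_map.1 hu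
      rw [LinearMap.adjoint_inner_left]
      rw [real_inner_comm]; exact hw (f v) hv
    · intro hv
      have h2 : f v ∈ Wᗮᗮ := by
        rw [Submodule.mem_orthogonal]
        intro w hw
        have := hv (LinearMap.adjoint f w) (Submodule.mem_map_of_mem hw)
        rw [LinearMap.adjoint_inner_left] at this
        exact this
      rwa [Submodule.orthogonal_orthogonal] at h2
  have e1 := Submodule.finrank_add_finrank_orthogonal (K := W)
  have e2 := Submodule.finrank_add_finrank_orthogonal
    (K := Submodule.map (LinearMap.adjoint f) Wᗮ)
  have e3 : Module.finrank ℝ (Submodule.map (LinearMap.adjoint f) Wᗮ) ≤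
      Module.finrank ℝ Wᗮ := Submodule.finrank_map_le _ _
  rw [hW]
  omega



lemma eventually_linear (a c' c : ℝ) (h : c' < c) :
    ∀ᶠ n : ℕ in atTop, a + (n : ℝ) * c' ≤ (n : ℝ) * c := by
  obtain ⟨N, hN⟩ := exists_nat_ge (a / (c - c'))
  filter_upwards [Filter.eventually_ge_atTop N] with n hn
  have h1 : a / (c - c') ≤ (n : ℝ) := hN.trans (by exact_mod_cast hn)
  have h2 : a ≤ (n : ℝ) * (c - c') := by
    rw [div_le_iff₀ (by linarith)] at h1; linarith
  nlinarith

variable {X : Type*}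

lemma good_shift (T : X → X) (𝔸 : ℕ → X → Matrix (Fin d) (Fin d) ℝ)
    (hcoc : ∀ x m n, 𝔸 (m + n) x = 𝔸 n (T^[m] x) * 𝔸 m x) (x : X) (lam : ℝ)
    (v : EuclideanSpace ℝ (Fin d)) :
    good (fun n => 𝔸 n x) lam v ↔ good (fun n => 𝔸 n (T x)) lam (matApp (𝔸 1 x) v) := by
  have hkey : ∀ n : ℕ, matApp (𝔸 n (T x)) (matApp (𝔸 1 x) v) = matApp (𝔸 (1 + n) x) v := by
    intro n
    rw [hcoc x 1 n, Function.iterate_one, matApp_mul]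
  constructor
  · intro h c hc
    set c' := (lam + c) / 2 with hcdef
    have h1 : lam < c' := by simp only [hcdef]; linarith
    have h2 : c' < c := by simp only [hcdef]; linarith
    obtain ⟨N, hN⟩ := Filter.eventually_atTop.1 (h c' h1)
    obtain ⟨M, hM⟩ := Filter.eventually_atTop.1 (eventually_linear c' c' c h2)
    rw [Filter.eventually_atTop]
    refine ⟨N + M, fun n hn => ?_⟩
    rw [hkey n]
    have h5 := hN (1 + n) (by omega)
    refine h5.trans (Real.exp_le_exp.2 ?_)
    have h6 := hM n (by omega)
    push_cast
    linarith
  · intro h c hc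
    set c' := (lam + c) / 2 with hcdef
    have h1 : lam < c' := by simp only [hcdef]; linarith
    have h2 : c' < c := by simp only [hcdef]; linarith
    obtain ⟨N, hN⟩ := Filter.eventually_atTop.1 (h c' h1)
    obtain ⟨M, hM⟩ := Filter.eventually_atTop.1 (eventually_linear (-c) c' c h2)
    rw [Filter.eventually_atTop]
    refine ⟨N + M + 1, fun n hn => ?_⟩
    obtain ⟨m, rfl⟩ : ∃ m, n = 1 + m := ⟨n - 1, by omega⟩
    have h5 := hN m (by omega)
    rw [hkey m] at h5
    refine h5.trans (Real.exp_le_exp.2 ?_)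
    have h6 := hM m (by omega)
    push_cast
    linarith

lemma goodSub_comap (T : X → X) (𝔸 : ℕ → X → Matrix (Fin d) (Fin d) ℝ)
    (hcoc : ∀ x m n, 𝔸 (m + n) x = 𝔸 n (T^[m] x) * 𝔸 m x) (x : X) (lam : ℝ) :
    goodSub (fun n => 𝔸 n x) lam =
      (goodSub (fun n => 𝔸 n (T x)) lam).comap (Matrix.toEuclideanLin (𝔸 1 x)) := by
  ext v
  rw [Submodule.mem_comap, mem_goodSub, good_shift T 𝔸 hcoc x lam v]
  exact Iff.rfl

lemma finrank_decrease (T : X → X) (𝔸 : ℕ → X → Matrix (Fin d) (Fin d) ℝ)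
    (hcoc : ∀ x m n, 𝔸 (m + n) x = 𝔸 n (T^[m] x) * 𝔸 m x) (x : X) (lam : ℝ) :
    Module.finrank ℝ (goodSub (fun n => 𝔸 n (T x)) lam)
      ≤ Module.finrank ℝ (goodSub (fun n => 𝔸 n x) lam) := by
  rw [goodSub_comap T 𝔸 hcoc x lam]
  exact finrank_le_comap _ _


lemma matApp_le (B : Matrix (Fin d) (Fin d) ℝ) (w : EuclideanSpace ℝ (Fin d)) :
    ‖matApp B w‖ ≤ matOpNorm B * ‖w‖ := by
  exact (LinearMap.toContinuousLinearMap (Matrix.toEuclideanLin B)).le_opNorm w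

lemma matOpNorm_nonneg (B : Matrix (Fin d) (Fin d) ℝ) : 0 ≤ matOpNorm B := norm_nonneg _

lemma continuous_matApp_norm (B : Matrix (Fin d) (Fin d) ℝ) :
    Continuous fun y : EuclideanSpace ℝ (Fin d) => ‖matApp B y‖ := by
  have h := (LinearMap.toContinuousLinearMap (Matrix.toEuclideanLin B)).continuous
  have h2 : Continuous fun y : EuclideanSpace ℝ (Fin d) => matApp B y := by
    simpa [matApp] using h
  exact h2.norm

def KK (d k : ℕ) : Set (Fin k → EuclideanSpace ℝ (Fin d)) := {v | Orthonormal ℝ v}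

lemma isClosed_KK (k : ℕ) : IsClosed (KK d k) := by
  have heq : KK d k = ⋂ i, ⋂ j, {v : Fin k → EuclideanSpace ℝ (Fin d) |
      (inner ℝ (v i) (v j) : ℝ) = if i = j then 1 else 0} := by
    ext v
    simp only [KK, Set.mem_setOf_eq, orthonormal_iff_ite, Set.mem_iInter, Set.mem_setOf_eq]
  rw [heq]
  exact isClosed_iInter fun i => isClosed_iInter fun j =>
    isClosed_eq (Continuous.inner (continuous_apply i) (continuous_apply j)) continuous_const

lemma isCompact_KK (k : ℕ) : IsCompact (KK d k) := by
  apply IsCompact.of_isClosed_subset (isCompact_closedBall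
    (0 : Fin k → EuclideanSpace ℝ (Fin d)) 1) (isClosed_KK k)
  intro v hv
  rw [Metric.mem_closedBall, dist_zero_right]
  rcases isEmpty_or_nonempty (Fin k) with h | h
  · have hv0 : v = 0 := funext fun l => h.elim l
    simp [hv0]
  · apply pi_norm_le_iff_of_nonneg (by norm_num : (0:ℝ) ≤ 1) |>.2
    intro l
    rw [hv.1 l]

lemma KK_nonempty (k : ℕ) (hk : k ≤ d) : (KK d k).Nonempty := by
  refine ⟨fun l => (EuclideanSpace.basisFun (Fin d) ℝ) (Fin.castLE hk l), ?_⟩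
  exact (EuclideanSpace.basisFun (Fin d) ℝ).orthonormal.comp _ (Fin.castLE_injective hk)

lemma exists_dense_seq (k : ℕ) (hk : k ≤ d) :
    ∃ u : ℕ → (Fin k → EuclideanSpace ℝ (Fin d)), (∀ i, u i ∈ KK d k) ∧
      ∀ w ∈ KK d k, ∀ δ : ℝ, 0 < δ → ∃ i, dist (u i) w < δ := by
  obtain ⟨w₀, hw₀⟩ := KK_nonempty k hk
  haveI : Nonempty (KK d k) := ⟨⟨w₀, hw₀⟩⟩
  obtain ⟨s, hsc, hsd⟩ := TopologicalSpace.exists_countable_dense (KK d k)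
  obtain ⟨f, hf⟩ := hsc.exists_eq_range hsd.nonempty
  refine ⟨fun i => (f i : Fin k → EuclideanSpace ℝ (Fin d)), fun i => (f i).2, ?_⟩
  intro w hw δ hδ
  have h1 : (⟨w, hw⟩ : KK d k) ∈ closure s := hsd _
  obtain ⟨b, hb1, hb2⟩ := Metric.mem_closure_iff.1 h1 δ hδ
  rw [hf] at hb1
  obtain ⟨i, rfl⟩ := hb1
  exact ⟨i, by rw [dist_comm]; rw [Subtype.dist_eq] at hb2; exact hb2⟩


def Rpred {k : ℕ} (M : ℕ → Matrix (Fin d) (Fin d) ℝ)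
    (u : ℕ → (Fin k → EuclideanSpace ℝ (Fin d))) (r : ℝ) : Prop :=
  ∃ N : ℕ, ∀ m : ℕ, ∃ i : ℕ, ∀ n ∈ Finset.Icc N (N + m), ∀ l : Fin k,
    ‖matApp (M n) (u i l)‖ < Real.exp (n * r) + 1 / (m + 1)

lemma Rpred_of_frame {k : ℕ} {M : ℕ → Matrix (Fin d) (Fin d) ℝ}
    {u : ℕ → (Fin k → EuclideanSpace ℝ (Fin d))} {r : ℝ}
    (hu2 : ∀ w ∈ KK d k, ∀ δ : ℝ, 0 < δ → ∃ i, dist (u i) w < δ)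
    {v : Fin k → EuclideanSpace ℝ (Fin d)} (hv : v ∈ KK d k)
    (hb : ∀ᶠ n : ℕ in atTop, ∀ l, ‖matApp (M n) (v l)‖ ≤ Real.exp (n * r)) :
    Rpred M u r := by
  obtain ⟨N, hN⟩ := Filter.eventually_atTop.1 hb
  refine ⟨N, fun m => ?_⟩
  have hne : (Finset.Icc N (N + m)).Nonempty := ⟨N, by simp⟩
  set L : ℝ := (Finset.Icc N (N + m)).sup' hne (fun n => matOpNorm (M n)) with hL
  have hL0 : 0 ≤ L := by
    rw [hL]
    exact le_trans (matOpNorm_nonneg (M N))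
      (Finset.le_sup' (fun n => matOpNorm (M n)) (Finset.mem_Icc.2 ⟨le_rfl, Nat.le_add_right N m⟩))
  have hm1 : (0:ℝ) < 1 / ((m:ℝ) + 1) := by positivity
  set δ : ℝ := (1 / ((m:ℝ) + 1)) / (L + 1) with hδdef
  have hδ : 0 < δ := by positivity
  obtain ⟨i, hi⟩ := hu2 v hv δ hδ
  refine ⟨i, fun n hn l => ?_⟩
  have hmem := Finset.mem_Icc.1 hn
  have hb1 : ‖matApp (M n) (v l)‖ ≤ Real.exp (n * r) := hN n hmem.1 l
  have hdiff : ‖matApp (M n) (u i l) - matApp (M n) (v l)‖ ≤ L * δ := by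
    have h1 : matApp (M n) (u i l) - matApp (M n) (v l) = matApp (M n) (u i l - v l) := by
      rw [show matApp (M n) (u i l - v l) = _ from map_sub (Matrix.toEuclideanLin (M n)) _ _]
      rfl
    rw [h1]
    calc ‖matApp (M n) (u i l - v l)‖ ≤ matOpNorm (M n) * ‖u i l - v l‖ := matApp_le _ _
      _ ≤ L * δ := by
        have hMn : matOpNorm (M n) ≤ L := by
          rw [hL]; exact Finset.le_sup' (fun n => matOpNorm (M n)) hn
        apply mul_le_mul hMn ?_ (norm_nonneg _) hL0
        calc ‖u i l - v l‖ = dist (u i l) (v l) := (dist_eq_norm _ _).symm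
          _ ≤ dist (u i) v := dist_le_pi_dist _ _ _
          _ ≤ δ := hi.le
  have hLδ : L * δ < 1 / ((m:ℝ) + 1) := by
    have hfrac : L / (L + 1) < 1 := by
      rw [div_lt_one (by linarith)]; linarith
    calc L * δ = (1 / ((m:ℝ) + 1)) * (L / (L + 1)) := by rw [hδdef]; ring
      _ < (1 / ((m:ℝ) + 1)) * 1 := mul_lt_mul_of_pos_left hfrac hm1
      _ = 1 / ((m:ℝ) + 1) := mul_one _
  have habel : matApp (M n) (v l) + (matApp (M n) (u i l) - matApp (M n) (v l))
      = matApp (M n) (u i l) := by abel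
  calc ‖matApp (M n) (u i l)‖
      = ‖matApp (M n) (v l) + (matApp (M n) (u i l) - matApp (M n) (v l))‖ := by rw [habel]
    _ ≤ ‖matApp (M n) (v l)‖ + ‖matApp (M n) (u i l) - matApp (M n) (v l)‖ := norm_add_le _ _
    _ ≤ Real.exp (n * r) + L * δ := add_le_add hb1 hdiff
    _ < Real.exp (n * r) + 1 / ((m:ℝ) + 1) := by linarith

lemma frame_of_Rpred {k : ℕ} {M : ℕ → Matrix (Fin d) (Fin d) ℝ}
    {u : ℕ → (Fin k → EuclideanSpace ℝ (Fin d))} {r : ℝ}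
    (hu1 : ∀ i, u i ∈ KK d k) (h : Rpred M u r) :
    ∃ v ∈ KK d k, ∀ᶠ n : ℕ in atTop, ∀ l, ‖matApp (M n) (v l)‖ ≤ Real.exp (n * r) := by
  obtain ⟨N, hN⟩ := h
  choose i hi using hN
  obtain ⟨v, hv, φ, hφ, hconv⟩ := (isCompact_KK (d := d) k).tendsto_subseq
    (fun m => hu1 (i m))
  refine ⟨v, hv, Filter.eventually_atTop.2 ⟨N, fun n hn => fun l => ?_⟩⟩
  have hg : Continuous fun w : Fin k → EuclideanSpace ℝ (Fin d) => ‖matApp (M n) (w l)‖ :=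
    (continuous_matApp_norm (M n)).comp (continuous_apply l)
  have htend : Tendsto (fun t => ‖matApp (M n) (u (i (φ t)) l)‖) atTop
      (𝓝 ‖matApp (M n) (v l)‖) := (hg.tendsto v).comp hconv
  have hlim2 : Tendsto (fun t : ℕ => Real.exp (n * r) + 1 / ((φ t : ℝ) + 1)) atTop
      (𝓝 (Real.exp (n * r) + 0)) :=
    tendsto_const_nhds.add (tendsto_one_div_add_atTop_nhds_zero_nat.comp hφ.tendsto_atTop)
  have hbound : ∀ᶠ t : ℕ in atTop, ‖matApp (M n) (u (i (φ t)) l)‖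
      ≤ Real.exp (n * r) + 1 / ((φ t : ℝ) + 1) := by
    filter_upwards [Filter.eventually_ge_atTop n] with t ht
    have hφt : n ≤ N + φ t := le_trans (le_trans ht hφ.le_apply) (Nat.le_add_left _ _)
    exact (hi (φ t) n (Finset.mem_Icc.2 ⟨hn, hφt⟩) l).le
  have := le_of_tendsto_of_tendsto htend hlim2 hbound
  simpa using this

lemma frame_of_finrank {k : ℕ} {M : ℕ → Matrix (Fin d) (Fin d) ℝ} {lam r : ℝ}
    (hk : k ≤ Module.finrank ℝ (goodSub M lam)) (hr : lam < r) :
    ∃ v ∈ KK d k, ∀ᶠ n : ℕ in atTop, ∀ l : Fin k, ‖matApp (M n) (v l)‖ ≤ Real.exp (n * r) := by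
  set W := goodSub M lam with hW
  set B := stdOrthonormalBasis ℝ W with hB
  set v : Fin k → EuclideanSpace ℝ (Fin d) := fun l => (B (Fin.castLE hk l) : _) with hvdef
  have hon : Orthonormal ℝ v := by
    have h1 : Orthonormal ℝ (fun j : Fin (Module.finrank ℝ W) => ((B j : W) : _)) :=
      B.orthonormal.comp_linearIsometry W.subtypeₗᵢ
    exact h1.comp _ (Fin.castLE_injective hk)
  refine ⟨v, hon, ?_⟩
  rw [Filter.eventually_all]
  intro l
  have hmem : v l ∈ W := (B (Fin.castLE hk l)).2
  exact hmem r hr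

lemma finrank_of_frame {k : ℕ} {M : ℕ → Matrix (Fin d) (Fin d) ℝ} {r : ℝ}
    {v : Fin k → EuclideanSpace ℝ (Fin d)} (hv : v ∈ KK d k)
    (hb : ∀ᶠ n : ℕ in atTop, ∀ l : Fin k, ‖matApp (M n) (v l)‖ ≤ Real.exp (n * r)) :
    k ≤ Module.finrank ℝ (goodSub M r) := by
  have hmem : ∀ l, v l ∈ goodSub M r := by
    intro l c hc
    filter_upwards [hb] with n hn
    refine (hn l).trans (Real.exp_le_exp.2 ?_)
    exact mul_le_mul_of_nonneg_left hc.le (Nat.cast_nonneg n)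
  have hspan : Submodule.span ℝ (Set.range v) ≤ goodSub M r :=
    Submodule.span_le.2 (Set.range_subset_iff.2 hmem)
  have hcard : Module.finrank ℝ (Submodule.span ℝ (Set.range v)) = k := by
    rw [finrank_span_eq_card hv.linearIndependent, Fintype.card_fin]
  calc k = Module.finrank ℝ (Submodule.span ℝ (Set.range v)) := hcard.symm
    _ ≤ Module.finrank ℝ (goodSub M r) := Submodule.finrank_mono hspan

lemma finrank_ge_iff {k : ℕ} {M : ℕ → Matrix (Fin d) (Fin d) ℝ}
    {u : ℕ → (Fin k → EuclideanSpace ℝ (Fin d))}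
    (hu1 : ∀ i, u i ∈ KK d k)
    (hu2 : ∀ w ∈ KK d k, ∀ δ : ℝ, 0 < δ → ∃ i, dist (u i) w < δ) (q : ℝ) :
    k ≤ Module.finrank ℝ (goodSub M q) ↔ ∀ c : ℚ, q < (c : ℝ) → Rpred M u (c : ℝ) := by
  constructor
  · intro h c hc
    obtain ⟨v, hv, hb⟩ := frame_of_finrank h hc
    exact Rpred_of_frame hu2 hv hb
  · intro h
    obtain ⟨c₁, h1, h2⟩ := stab M q
    rw [h2 c₁ h1 le_rfl]
    obtain ⟨v, hv, hb⟩ := frame_of_Rpred hu1 (h c₁ h1)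
    exact finrank_of_frame hv hb


lemma matApp_apply_coord (B : Matrix (Fin d) (Fin d) ℝ) (w : EuclideanSpace ℝ (Fin d))
    (j : Fin d) : matApp B w j = ∑ i, B j i * w i := by
  rfl

lemma measurable_matAppNorm {X : Type*} [MeasurableSpace X]
    {𝔸 : ℕ → X → Matrix (Fin d) (Fin d) ℝ}
    (hmeas : Measurable fun p : ℕ × X => 𝔸 p.1 p.2) (n : ℕ) (w : EuclideanSpace ℝ (Fin d)) :
    Measurable fun x : X => ‖matApp (𝔸 n x) w‖ := by
  have h1 : Measurable fun x => 𝔸 n x := hmeas.comp measurable_prodMk_left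
  have h2 : ∀ (j i : Fin d), Measurable fun x => 𝔸 n x j i := by
    intro j i
    have hp : Measurable fun B : Matrix (Fin d) (Fin d) ℝ => B j i := by
      exact (measurable_pi_apply i).comp (measurable_pi_apply j)
    exact hp.comp h1
  have heq : (fun x : X => ‖matApp (𝔸 n x) w‖)
      = fun x => Real.sqrt (∑ j, ‖∑ i, 𝔸 n x j i * w i‖ ^ 2) := by
    funext x
    rw [EuclideanSpace.norm_eq]
    simp only [matApp_apply_coord]
  rw [heq]
  apply Real.continuous_sqrt.measurable.comp
  apply Finset.measurable_sum
  intro j _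
  have hs : Measurable fun x => ∑ i, 𝔸 n x j i * w i :=
    Finset.measurable_sum _ fun i _ => (h2 j i).mul measurable_const
  exact hs.norm.pow_const 2

lemma measurable_Rpred_set {X : Type*} [MeasurableSpace X]
    {𝔸 : ℕ → X → Matrix (Fin d) (Fin d) ℝ}
    (hmeas : Measurable fun p : ℕ × X => 𝔸 p.1 p.2) {k : ℕ}
    (u : ℕ → (Fin k → EuclideanSpace ℝ (Fin d))) (r : ℝ) :
    MeasurableSet {x : X | Rpred (fun n => 𝔸 n x) u r} := by
  have heq : {x : X | Rpred (fun n => 𝔸 n x) u r}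
      = ⋃ N : ℕ, ⋂ m : ℕ, ⋃ i : ℕ, ⋂ n ∈ Finset.Icc N (N + m), ⋂ l : Fin k,
        {x : X | ‖matApp (𝔸 n x) (u i l)‖ < Real.exp (n * r) + 1 / (m + 1)} := by
    ext x
    simp only [Rpred, Set.mem_setOf_eq, Set.mem_iUnion, Set.mem_iInter]
  rw [heq]
  refine MeasurableSet.iUnion fun N => MeasurableSet.iInter fun m =>
    MeasurableSet.iUnion fun i => MeasurableSet.iInter fun n => MeasurableSet.iInter fun hn =>
    MeasurableSet.iInter fun l => ?_
  exact measurableSet_lt (measurable_matAppNorm hmeas n (u i l)) measurable_const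

end S16

theorem stmt16 {X : Type*} [MeasurableSpace X] {d : ℕ}
    (μ : Measure X) [IsProbabilityMeasure μ] (T : X → X)
    (hT : MeasurePreserving T μ μ)
    (𝔸 : ℕ → X → Matrix (Fin d) (Fin d) ℝ)
    (hmeas : Measurable fun p : ℕ × X => 𝔸 p.1 p.2)
    (hcoc0 : ∀ x, 𝔸 0 x = 1)
    (hcoc : ∀ x m n, 𝔸 (m + n) x = 𝔸 n (T^[m] x) * 𝔸 m x)
    (hint : Integrable (fun x => max 0 (Real.log (matOpNorm (𝔸 1 x)))) μ) :
    ∀ᵐ x ∂μ, ∀ lam : ℝ,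
      Module.finrank ℝ (Submodule.span ℝ
        {v : EuclideanSpace ℝ (Fin d) |
          limsup (fun n : ℕ => (((n : ℝ)⁻¹ : ℝ) : EReal) * elog ‖matApp (𝔸 n (T x)) v‖) atTop
            ≤ (lam : EReal)}) =
      Module.finrank ℝ (Submodule.span ℝ
        {v : EuclideanSpace ℝ (Fin d) |
          limsup (fun n : ℕ => (((n : ℝ)⁻¹ : ℝ) : EReal) * elog ‖matApp (𝔸 n x) v‖) atTop
            ≤ (lam : EReal)}) := by
  classical
  set F : ℝ → X → ℕ := fun lam x => Module.finrank ℝ (S16.goodSub (fun n => 𝔸 n x) lam)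
    with hF
  have hpt : ∀ (lam : ℝ) (x : X), F lam (T x) ≤ F lam x := fun lam x =>
    S16.finrank_decrease T 𝔸 hcoc x lam
  have hFd : ∀ (lam : ℝ) (x : X), F lam x ≤ d := by
    intro lam x
    have h := Submodule.finrank_le (S16.goodSub (fun n => 𝔸 n x) lam)
    rwa [finrank_euclideanSpace_fin] at h
  have hEk : ∀ (c : ℚ) (k : ℕ), k ≤ d → MeasurableSet {x : X | k ≤ F (c : ℝ) x} := by
    intro c k hk
    obtain ⟨u, hu1, hu2⟩ := S16.exists_dense_seq (d := d) k hk
    have heq : {x : X | k ≤ F (c : ℝ) x}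
        = ⋂ c' : ℚ, {x : X | (c : ℝ) < (c' : ℝ) → S16.Rpred (fun n => 𝔸 n x) u (c' : ℝ)} := by
      ext x
      simp only [Set.mem_setOf_eq, Set.mem_iInter, hF]
      exact S16.finrank_ge_iff hu1 hu2 (c : ℝ)
    rw [heq]
    apply MeasurableSet.iInter
    intro c'
    by_cases h : (c : ℝ) < (c' : ℝ)
    · simp only [h, true_implies]
      exact S16.measurable_Rpred_set hmeas u (c' : ℝ)
    · simp only [h, false_implies, Set.setOf_true]
      exact MeasurableSet.univ
  have hae : ∀ c : ℚ, ∀ᵐ x ∂μ, F (c : ℝ) (T x) = F (c : ℝ) x := by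
    intro c
    set g : X → ℝ := fun x => ∑ k ∈ Finset.Icc 1 d, if k ≤ F (c : ℝ) x then (1 : ℝ) else 0
      with hg
    have hgF : ∀ x, g x = (F (c : ℝ) x : ℝ) := by
      intro x
      rw [hg]
      simp only
      rw [Finset.sum_boole]
      congr 1
      have hfil : Finset.filter (fun k => k ≤ F (c : ℝ) x) (Finset.Icc 1 d)
          = Finset.Icc 1 (F (c : ℝ) x) := by
        ext j
        simp only [Finset.mem_filter, Finset.mem_Icc]
        have := hFd (c : ℝ) x
        omega
      rw [hfil, Nat.card_Icc]
      omega
    have hgm : Measurable g := by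
      apply Finset.measurable_sum
      intro k hk
      exact Measurable.ite (hEk c k (Finset.mem_Icc.1 hk).2) measurable_const measurable_const
    have hgb : ∀ x, ‖g x‖ ≤ (d : ℝ) := by
      intro x
      rw [hgF, Real.norm_eq_abs, abs_of_nonneg (by positivity)]
      exact_mod_cast hFd (c : ℝ) x
    have hint2 : Integrable g μ := by
      refine ⟨hgm.aestronglyMeasurable, ?_⟩
      exact MeasureTheory.HasFiniteIntegral.of_bounded (C := (d : ℝ))
        (Filter.Eventually.of_forall hgb)
    have hcomp : Integrable (fun x => g (T x)) μ :=
      (hT.integrable_comp hgm.aestronglyMeasurable).2 hint2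
    have hieq : ∫ x, g (T x) ∂μ = ∫ x, g x ∂μ := by
      have hsm : AEStronglyMeasurable g (Measure.map T μ) := by
        rw [hT.map_eq]; exact hgm.aestronglyMeasurable
      have h := MeasureTheory.integral_map hT.measurable.aemeasurable hsm
      rw [hT.map_eq] at h
      exact h.symm
    have hzero : ∫ x, (g x - g (T x)) ∂μ = 0 := by
      rw [MeasureTheory.integral_sub hint2 hcomp, hieq, sub_self]
    have hnn : ∀ x, 0 ≤ g x - g (T x) := by
      intro x
      rw [hgF, hgF]
      have := hpt (c : ℝ) x
      have h2 : ((F (c : ℝ) (T x) : ℝ)) ≤ (F (c : ℝ) x : ℝ) := by exact_mod_cast this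
      linarith
    have hzero2 := (MeasureTheory.integral_eq_zero_iff_of_nonneg hnn
      (hint2.sub hcomp)).1 hzero
    filter_upwards [hzero2] with x hx
    have hx2 : g x = g (T x) := by
      have : g x - g (T x) = 0 := hx
      linarith
    rw [hgF, hgF] at hx2
    exact_mod_cast hx2.symm
  have hae2 : ∀ᵐ x ∂μ, ∀ c : ℚ, F (c : ℝ) (T x) = F (c : ℝ) x := ae_all_iff.2 hae
  filter_upwards [hae2] with x hx lam
  have hset : ∀ y : X,
      {v : EuclideanSpace ℝ (Fin d) |
        limsup (fun n : ℕ => (((n : ℝ)⁻¹ : ℝ) : EReal) * elog ‖matApp (𝔸 n y) v‖) atTop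
          ≤ (lam : EReal)} = ↑(S16.goodSub (fun n => 𝔸 n y) lam) := by
    intro y
    ext v
    exact S16.good_iff_limsup
  rw [hset (T x), hset x, Submodule.span_eq, Submodule.span_eq]
  obtain ⟨c₁, h1, h2⟩ := S16.stab (fun n => 𝔸 n (T x)) lam
  obtain ⟨c₂, h3, h4⟩ := S16.stab (fun n => 𝔸 n x) lam
  set c : ℚ := min c₁ c₂ with hc
  have hlamc : lam < (c : ℝ) := by
    rw [hc]
    push_cast
    exact lt_min h1 h3
  have hcc1 : (c : ℝ) ≤ (c₁ : ℝ) := by exact_mod_cast min_le_left c₁ c₂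
  have hcc2 : (c : ℝ) ≤ (c₂ : ℝ) := by exact_mod_cast min_le_right c₁ c₂
  rw [h2 c hlamc hcc1, h4 c hlamc hcc2]
  exact hx c

end
end
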